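/- For a ∈ ℝ^M with M ≥ 2, if max_i |a_i| ≤ ε then for all indices i, the product softmax(a)_i · (1 - softmax(a)_i) ≥ (M-1) e^{-4ε} / M², i.e., it is bounded below by a positive constant depending only on M and ε. -/
import Mathlib


open Real Finset

noncomputable def softmax {M : ℕ} (a : Fin M → ℝ) (i : Fin M) : ℝ :=
  Real.exp (a i) / ∑ j, Real.exp (a j)

/-- If `M ≥ 2` and all entries of `a` are bounded by `ε` in absolute value, then
each product `softmax(a)_i (1 - softmax(a)_i)` is at least `(M-1) e^{-4ε} / M²`. -/
theorem softmax_product_lower_bound {M : ℕ} (hM : 2 ≤ M) (ε : ℝ) (hε : 0 ≤ ε)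
    (a : Fin M → ℝ) (ha : ∀ j, |a j| ≤ ε) :
    ∀ i : Fin M,
      ((M : ℝ) - 1) * Real.exp (-(4 * ε)) / (M : ℝ) ^ 2 ≤
        softmax a i * (1 - softmax a i) := by
  intro i
  set S : ℝ := ∑ j, Real.exp (a j) with hS
  have hMpos : (0:ℝ) < M := by positivity
  have hSpos : 0 < S := Finset.sum_pos (fun j _ => Real.exp_pos _) ⟨i, Finset.mem_univ i⟩
  have hlow : ∀ j, Real.exp (-ε) ≤ Real.exp (a j) := fun j =>
    Real.exp_le_exp.2 (neg_le_of_abs_le (ha j))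
  have hup : ∀ j, Real.exp (a j) ≤ Real.exp ε := fun j =>
    Real.exp_le_exp.2 (le_of_abs_le (ha j))
  have hSup : S ≤ M * Real.exp ε := by
    calc S ≤ ∑ _j : Fin M, Real.exp ε := Finset.sum_le_sum (fun j _ => hup j)
    _ = M * Real.exp ε := by simp [mul_comm]
  have hrest : ((M:ℝ) - 1) * Real.exp (-ε) ≤ S - Real.exp (a i) := by
    have heq : S - Real.exp (a i) = ∑ j ∈ Finset.univ.erase i, Real.exp (a j) := by
      rw [Finset.sum_erase_eq_sub (Finset.mem_univ i)]
    have hsum := Finset.card_nsmul_le_sum (Finset.univ.erase i)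
      (fun j => Real.exp (a j)) (Real.exp (-ε)) (fun j _ => hlow j)
    have hcard : (Finset.univ.erase i).card = M - 1 := by
      rw [Finset.card_erase_of_mem (Finset.mem_univ i)]; simp
    rw [heq]
    rw [hcard, nsmul_eq_mul, Nat.cast_sub (by omega), Nat.cast_one] at hsum
    exact hsum
  have hsm : softmax a i = Real.exp (a i) / S := rfl
  rw [hsm]
  have hprod : Real.exp (a i) / S * (1 - Real.exp (a i) / S)
      = Real.exp (a i) * (S - Real.exp (a i)) / (S * S) := by
    field_simp
  rw [hprod]
  rw [div_le_div_iff₀ (by positivity) (by positivity)]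
  have hM1 : (0:ℝ) ≤ (M:ℝ) - 1 := by
    have : (1:ℝ) ≤ M := by exact_mod_cast Nat.one_le_of_lt hM
    linarith
  have key : ((M:ℝ) - 1) * Real.exp (-(4*ε)) * (M * Real.exp ε)^2 ≤
      Real.exp (a i) * (S - Real.exp (a i)) * (M:ℝ)^2 := by
    have h1 : Real.exp (-ε) * (((M:ℝ) - 1) * Real.exp (-ε)) ≤
        Real.exp (a i) * (S - Real.exp (a i)) :=
      mul_le_mul (hlow i) hrest (by positivity) (Real.exp_pos _).le
    have he : Real.exp (-(4*ε)) * (Real.exp ε)^2 = Real.exp (-ε) * Real.exp (-ε) := by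
      rw [sq, ← Real.exp_add, ← Real.exp_add, ← Real.exp_add]
      congr 1; ring
    calc ((M:ℝ) - 1) * Real.exp (-(4*ε)) * (M * Real.exp ε)^2
        = (Real.exp (-ε) * (((M:ℝ) - 1) * Real.exp (-ε))) * (M:ℝ)^2 := by
          rw [mul_pow]
          calc ((M:ℝ) - 1) * Real.exp (-(4*ε)) * ((M:ℝ)^2 * (Real.exp ε)^2)
              = ((M:ℝ) - 1) * (Real.exp (-(4*ε)) * (Real.exp ε)^2) * (M:ℝ)^2 := by ring
            _ = (Real.exp (-ε) * (((M:ℝ) - 1) * Real.exp (-ε))) * (M:ℝ)^2 := by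
                rw [he]; ring
      _ ≤ Real.exp (a i) * (S - Real.exp (a i)) * (M:ℝ)^2 :=
          mul_le_mul_of_nonneg_right h1 (by positivity)
  calc ((M:ℝ) - 1) * Real.exp (-(4*ε)) * (S * S)
      ≤ ((M:ℝ) - 1) * Real.exp (-(4*ε)) * (M * Real.exp ε)^2 := by
        apply mul_le_mul_of_nonneg_left
        · rw [sq]; exact mul_le_mul hSup hSup hSpos.le (by positivity)
        · exact mul_nonneg hM1 (Real.exp_pos _).le
    _ ≤ Real.exp (a i) * (S - Real.exp (a i)) * (M:ℝ)^2 := key
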